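/- Let c = (c_1,…,c_n) be an increasing positive integer sequence with c_1 = 2, and let A, B ⊆ S_c = [c_1] × ⋯ × [c_n] be such that every tuple in A agrees in some coordinate with every tuple in B. Then |B| ≤ |S_c| − |A|, and consequently |A|·|B| ≤ (|S_c|/2)². -/

import Mathlib

theorem stmt16 (n : ℕ) (c : Fin (n + 1) → ℕ) (hmono : Monotone c) (hpos : ∀ i, 1 ≤ c i)
    (hc0 : c 0 = 2)
    (A B : Finset (Fin (n + 1) → ℕ))
    (hA : ∀ a ∈ A, ∀ i, 1 ≤ a i ∧ a i ≤ c i)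
    (hB : ∀ b ∈ B, ∀ i, 1 ≤ b i ∧ b i ≤ c i)
    (hcross : ∀ a ∈ A, ∀ b ∈ B, ∃ i, a i = b i) :
    B.card ≤ (∏ i, c i) - A.card ∧ 4 * (A.card * B.card) ≤ (∏ i, c i) ^ 2 := by
  have hc2 : ∀ i, 2 ≤ c i := fun i => hc0 ▸ hmono (Fin.zero_le i)
  set S : Finset (Fin (n + 1) → ℕ) := Fintype.piFinset (fun i => Finset.Icc 1 (c i)) with hS
  have hScard : S.card = ∏ i, c i := by
    simp [hS, Fintype.card_piFinset, Nat.card_Icc]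
  set θ : (Fin (n + 1) → ℕ) → (Fin (n + 1) → ℕ) := fun a i => (a i % c i) + 1 with hθ
  set ψ : (Fin (n + 1) → ℕ) → (Fin (n + 1) → ℕ) :=
    fun b i => if b i = 1 then c i else b i - 1 with hψ
  have hψθ : ∀ a ∈ A, ψ (θ a) = a := by
    intro a ha
    funext i
    obtain ⟨h1, h2⟩ := hA a ha i
    simp only [hθ, hψ]
    rcases lt_or_eq_of_le h2 with h | h
    · have hm : a i % c i = a i := Nat.mod_eq_of_lt h
      rw [hm]
      have : a i + 1 ≠ 1 := by omega
      simp [this]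
      intro h0; omega
    · rw [h, Nat.mod_self]; simp
  have himg : A.image θ ⊆ S := by
    intro x hx
    obtain ⟨a, ha, rfl⟩ := Finset.mem_image.mp hx
    simp only [hS, Fintype.mem_piFinset, Finset.mem_Icc, hθ]
    intro i
    obtain ⟨h1, h2⟩ := hA a ha i
    constructor
    · omega
    · have := Nat.mod_lt (a i) (show 0 < c i by omega)
      omega
  have hBsub : B ⊆ S := by
    intro b hb
    simp only [hS, Fintype.mem_piFinset, Finset.mem_Icc]
    intro i; exact hB b hb i
  have hdisj : Disjoint (A.image θ) B := by
    rw [Finset.disjoint_left]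
    intro x hx hxB
    obtain ⟨a, ha, rfl⟩ := Finset.mem_image.mp hx
    obtain ⟨i, hi⟩ := hcross a ha (θ a) hxB
    obtain ⟨h1, h2⟩ := hA a ha i
    have := hc2 i
    simp only [hθ] at hi
    rcases lt_or_eq_of_le h2 with h | h
    · rw [Nat.mod_eq_of_lt h] at hi; omega
    · rw [h, Nat.mod_self] at hi; omega
  have himgcard : (A.image θ).card = A.card := by
    apply Finset.card_image_of_injOn
    intro a ha b hb hab
    have := hψθ a ha
    have := hψθ b hb
    rw [← hψθ a ha, ← hψθ b hb, hab]
  have hsum : A.card + B.card ≤ ∏ i, c i := by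
    calc A.card + B.card = (A.image θ).card + B.card := by rw [himgcard]
    _ = (A.image θ ∪ B).card := (Finset.card_union_of_disjoint hdisj).symm
    _ ≤ S.card := Finset.card_le_card (Finset.union_subset himg hBsub)
    _ = ∏ i, c i := hScard
  refine ⟨by omega, ?_⟩
  nlinarith [sq_nonneg (A.card + B.card), sq_nonneg ((A.card : ℤ) - B.card), hsum,
    Nat.pow_le_pow_left hsum 2]
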